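/- Let L : ℝ^p → ℝ be differentiable, convex, and τ₂-smooth with ‖∇L(θ)‖₂ ≤ B for all θ ∈ ℝ^p, let θ̂ be a global minimizer of L, and let 0 < η ≤ 1/(2τ₂). Let K₀ ≥ 1 be an integer and let θ^{(0)}, …, θ^{(K₀)} be noisy gradient descent iterates with ‖N_k‖₂ ≤ ε for all k < K₀. Set R = ‖θ^{(0)} − θ̂‖₂ and C' = 2ηR + 2η²(B+1), and assume (K₀C' + 2(K₀−1)η)ε ≤ 1. Then L(θ^{(K₀)}) − L(θ̂) ≤ R²/(2ηK₀) + (R+1)ε + (2ηB + ηε/2)(K₀+1)ε. -/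

import Mathlib

open scoped RealInnerProductSpace
open Filter Set Topology

section
variable {F : Type*} [NormedAddCommGroup F] [InnerProductSpace ℝ F] [CompleteSpace F]

lemma conv_grad (L : F → ℝ) (hdiff : Differentiable ℝ L) (hconv : ConvexOn ℝ Set.univ L)
    (x y : F) : ⟪gradient L x, y - x⟫ ≤ L y - L x := by
  set v := y - x with hv
  set f : ℝ → ℝ := fun t => L (x + t • v) with hf
  have hline : HasDerivAt (fun t : ℝ => x + t • v) v 0 :=
    ((hasDerivAt_id (0:ℝ)).smul_const v).const_add x |>.congr_deriv (by simp)
  have hgrad : HasGradientAt L (gradient L x) x := (hdiff x).hasGradientAt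
  have hfd : HasFDerivAt L ((InnerProductSpace.toDual ℝ F) (gradient L x)) x :=
    hasGradientAt_iff_hasFDerivAt.mp hgrad
  have hderiv : HasDerivAt f ⟪gradient L x, v⟫ 0 := by
    have hfd' : HasFDerivAt L ((InnerProductSpace.toDual ℝ F) (gradient L x)) (x + (0:ℝ) • v) := by
      simpa using hfd
    have := hfd'.comp_hasDerivAt (0:ℝ) hline
    simpa [hf, InnerProductSpace.toDual_apply_apply, Function.comp_def] using this
  have hslope : Tendsto (slope f 0) (𝓝[>] 0) (𝓝 ⟪gradient L x, v⟫) :=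
    (hasDerivAt_iff_tendsto_slope.mp hderiv).mono_left
      (nhdsWithin_mono _ (fun t ht => ne_of_gt ht))
  have hev : ∀ᶠ t in 𝓝[>] (0:ℝ), slope f 0 t ≤ L y - L x := by
    filter_upwards [Ioo_mem_nhdsGT_of_mem (Set.left_mem_Ico.mpr one_pos)] with t ht
    have h1 : f t ≤ (1 - t) * L x + t * L y := by
      have := hconv.2 (Set.mem_univ x) (Set.mem_univ y)
        (by linarith [ht.2] : (0:ℝ) ≤ 1 - t) (le_of_lt ht.1) (by ring)
      have hx : (1 - t) • x + t • y = x + t • v := by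
        simp [hv, smul_sub, sub_smul]; module
      simpa [hx, smul_eq_mul] using this
    have h0 : f 0 = L x := by simp [hf]
    rw [slope_def_field, div_le_iff₀ (by simpa using ht.1)]
    nlinarith [ht.1]
  exact le_of_tendsto hslope hev

-- per-step lemma
set_option maxHeartbeats 1000000 in
lemma step_lemma (L : F → ℝ) (τ₂ B η ε : ℝ) (hτ₂ : 0 < τ₂) (hB : 0 < B)
    (hdiff : Differentiable ℝ L) (hconv : ConvexOn ℝ Set.univ L)
    (hsmooth : ∀ θ₁ θ₂ : F, L θ₁ - L θ₂ ≤ ⟪gradient L θ₂, θ₁ - θ₂⟫ + τ₂ * ‖θ₁ - θ₂‖ ^ 2)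
    (hgrad : ∀ θ : F, ‖gradient L θ‖ ≤ B)
    (θhat : F) (hmin : ∀ θ, L θhat ≤ L θ)
    (hη : 0 < η) (hηle : η ≤ 1 / (2 * τ₂)) (hε : 0 ≤ ε)
    (x n : F) (hn : ‖n‖ ≤ ε) (x' : F) (hx' : x' = x - η • gradient L x + η • n) :
    ‖x' - θhat‖ ≤ ‖x - θhat‖ + η * ε ∧
    ‖x' - θhat‖ ^ 2 + 2 * η * (L x' - L θhat) ≤
      ‖x - θhat‖ ^ 2 + 2 * η * ε * ‖x - θhat‖ + 2 * η ^ 2 * B * ε + 2 * η ^ 2 * ε ^ 2 ∧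
    L x' ≤ L x + (2 * η * B * ε + η * ε ^ 2 / 2) := by
  set g := gradient L x with hg
  set φ := x - η • g with hφ
  have hτη : τ₂ * η ≤ 1 / 2 := by
    rw [le_div_iff₀ (by positivity : (0:ℝ) < 2 * τ₂)] at hηle
    nlinarith
  have hgB : ‖g‖ ≤ B := hgrad x
  -- (i)
  have hi : ‖φ - θhat‖ ^ 2 =
      ‖x - θhat‖ ^ 2 - 2 * η * ⟪g, x - θhat⟫ + η ^ 2 * ‖g‖ ^ 2 := by
    have h1 : φ - θhat = (x - θhat) - η • g := by rw [hφ]; abel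
    rw [h1, norm_sub_sq_real, real_inner_smul_right, real_inner_comm, norm_smul]
    simp only [Real.norm_eq_abs, abs_of_pos hη, mul_pow]
    ring
  -- (ii)
  have hii : L φ - L x ≤ -(η / 2) * ‖g‖ ^ 2 := by
    have := hsmooth φ x
    have h1 : φ - x = -(η • g) := by rw [hφ]; abel
    rw [h1] at this
    have h2 : ⟪g, -(η • g)⟫ = -(η * ‖g‖ ^ 2) := by
      rw [inner_neg_right, real_inner_smul_right, real_inner_self_eq_norm_sq]
    have h3 : ‖-(η • g)‖ ^ 2 = η ^ 2 * ‖g‖ ^ 2 := by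
      rw [norm_neg, norm_smul]
      simp only [Real.norm_eq_abs, abs_of_pos hη, mul_pow]
    rw [h2, h3] at this
    nlinarith [sq_nonneg ‖g‖]
  -- (iii)
  have hiii : L x - L θhat ≤ ⟪g, x - θhat⟫ := by
    have := conv_grad L hdiff hconv x θhat
    have h1 : ⟪g, x - θhat⟫ = -⟪g, θhat - x⟫ := by
      rw [← inner_neg_right]; congr 1; abel
    rw [h1]; linarith
  -- (iv)
  have hiv : ‖φ - θhat‖ ^ 2 ≤ ‖x - θhat‖ ^ 2 - 2 * η * (L φ - L θhat) := by
    nlinarith [mul_le_mul_of_nonneg_left hiii (by positivity : (0:ℝ) ≤ 2 * η),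
      mul_le_mul_of_nonneg_left hii (by positivity : (0:ℝ) ≤ 2 * η)]
  -- (v)
  have hv : ‖φ - θhat‖ ≤ ‖x - θhat‖ := by
    nlinarith [norm_nonneg (φ - θhat), norm_nonneg (x - θhat), hmin φ]
  -- (vi)
  have hvi : L x' - L φ ≤ η * B * ε + η / 2 * ε ^ 2 := by
    have hs := hsmooth x' φ
    have h1 : x' - φ = η • n := by rw [hx', hφ]; abel
    rw [h1] at hs
    have h2 : ⟪gradient L φ, η • n⟫ ≤ η * B * ε := by
      rw [real_inner_smul_right]
      have hin := real_inner_le_norm (gradient L φ) n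
      have hb := hgrad φ
      have h21 : ‖gradient L φ‖ * ‖n‖ ≤ B * ε :=
        mul_le_mul hb hn (norm_nonneg n) hB.le
      have h22 : η * ⟪gradient L φ, n⟫ ≤ η * (B * ε) :=
        mul_le_mul_of_nonneg_left (le_trans hin h21) hη.le
      linarith
    have h3 : τ₂ * ‖η • n‖ ^ 2 ≤ η / 2 * ε ^ 2 := by
      rw [norm_smul]
      simp only [Real.norm_eq_abs, abs_of_pos hη]
      have hn2 : ‖n‖ ^ 2 ≤ ε ^ 2 := by nlinarith [norm_nonneg n]
      have hf1 : 0 ≤ (1 / 2 - τ₂ * η) * (η * ‖n‖ ^ 2) :=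
        mul_nonneg (by linarith) (by positivity)
      have hf2 : η / 2 * ‖n‖ ^ 2 ≤ η / 2 * ε ^ 2 :=
        mul_le_mul_of_nonneg_left hn2 (by positivity)
      nlinarith [hf1, hf2]
    linarith
  -- step1
  have hst1 : ‖x' - θhat‖ ≤ ‖x - θhat‖ + η * ε := by
    have h1 : x' - θhat = (φ - θhat) + η • n := by rw [hx', hφ]; abel
    calc ‖x' - θhat‖ ≤ ‖φ - θhat‖ + ‖η • n‖ := by rw [h1]; exact norm_add_le _ _
    _ ≤ ‖x - θhat‖ + η * ε := by
        rw [norm_smul]; simp only [Real.norm_eq_abs, abs_of_pos hη]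
        have : η * ‖n‖ ≤ η * ε := by nlinarith
        linarith
  refine ⟨hst1, ?_, ?_⟩
  · -- step2
    have h1 : x' - θhat = (φ - θhat) + η • n := by rw [hx', hφ]; abel
    have h2 : ‖x' - θhat‖ ≤ ‖φ - θhat‖ + η * ε := by
      calc ‖x' - θhat‖ ≤ ‖φ - θhat‖ + ‖η • n‖ := by rw [h1]; exact norm_add_le _ _
      _ ≤ ‖φ - θhat‖ + η * ε := by
          rw [norm_smul]; simp only [Real.norm_eq_abs, abs_of_pos hη]; nlinarith
    have h3 : ‖x' - θhat‖ ^ 2 ≤ ‖φ - θhat‖ ^ 2 + 2 * η * ε * ‖φ - θhat‖ + η ^ 2 * ε ^ 2 := by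
      have := pow_le_pow_left₀ (norm_nonneg (x' - θhat)) h2 2
      nlinarith [this]
    have e1 : 2 * η * (L x' - L φ) ≤ 2 * η * (η * B * ε + η / 2 * ε ^ 2) :=
      mul_le_mul_of_nonneg_left hvi (by positivity)
    have e2 : 2 * η * ε * ‖φ - θhat‖ ≤ 2 * η * ε * ‖x - θhat‖ :=
      mul_le_mul_of_nonneg_left hv (by positivity)
    nlinarith [h3, hiv, e1, e2]
  · -- step3
    have hs := hsmooth x' x
    have h1 : x' - x = η • (n - g) := by rw [hx', hφ, smul_sub]; abel
    rw [h1] at hs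
    have h2 : ⟪g, η • (n - g)⟫ = η * (⟪g, n⟫ - ‖g‖ ^ 2) := by
      rw [real_inner_smul_right, inner_sub_right, real_inner_self_eq_norm_sq]
    have h3 : ⟪g, n⟫ ≤ B * ε := by
      have := real_inner_le_norm g n
      nlinarith [norm_nonneg n, norm_nonneg g]
    have h4 : ‖n - g‖ ≤ ε + B := by
      calc ‖n - g‖ ≤ ‖n‖ + ‖g‖ := norm_sub_le _ _
      _ ≤ ε + B := by linarith
    have h5 : τ₂ * ‖η • (n - g)‖ ^ 2 ≤ η / 2 * ‖n - g‖ ^ 2 := by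
      rw [norm_smul]; simp only [Real.norm_eq_abs, abs_of_pos hη]
      have hf1 : 0 ≤ (1 / 2 - τ₂ * η) * (η * ‖n - g‖ ^ 2) :=
        mul_nonneg (by linarith) (by positivity)
      nlinarith [hf1]
    have h6 : ‖n - g‖ ^ 2 ≤ ‖g‖ ^ 2 + 2 * ‖g‖ * ε + ε ^ 2 := by
      have : ‖n - g‖ ≤ ‖g‖ + ε := by
        calc ‖n - g‖ ≤ ‖n‖ + ‖g‖ := norm_sub_le _ _
        _ ≤ ‖g‖ + ε := by linarith
      nlinarith [norm_nonneg (n - g), norm_nonneg g]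
    rw [h2] at hs
    have e1 : η * (⟪g, n⟫ - ‖g‖ ^ 2) ≤ η * (B * ε - ‖g‖ ^ 2) :=
      mul_le_mul_of_nonneg_left (by linarith) hη.le
    have e2 : η / 2 * ‖n - g‖ ^ 2 ≤ η / 2 * (‖g‖ ^ 2 + 2 * ‖g‖ * ε + ε ^ 2) :=
      mul_le_mul_of_nonneg_left h6 (by positivity)
    have e3 : η * (‖g‖ * ε) ≤ η * (B * ε) :=
      mul_le_mul_of_nonneg_left (mul_le_mul_of_nonneg_right hgB hε) hη.le
    nlinarith [hs, h5, e1, e2, e3, sq_nonneg ‖g‖, hη.le]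
end
lemma sum_range_cast (n : ℕ) : ∑ k ∈ Finset.range n, (k : ℝ) = (n : ℝ) * ((n : ℝ) - 1) / 2 := by
  induction n with
  | zero => simp
  | succ n ih => rw [Finset.sum_range_succ, ih]; push_cast; ring

set_option maxHeartbeats 1600000 in
/-- deterministic content of Proposition 1: a fixed number `K₀` of noisy gradient
descent steps reduces the suboptimality gap of a convex smooth objective. -/
theorem stmt_4 {p : ℕ} (L : EuclideanSpace ℝ (Fin p) → ℝ) (τ₂ B η ε : ℝ)
    (hτ₂ : 0 < τ₂) (hB : 0 < B)
    (hdiff : Differentiable ℝ L) (hconv : ConvexOn ℝ Set.univ L)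
    (hsmooth : ∀ θ₁ θ₂ : EuclideanSpace ℝ (Fin p),
      L θ₁ - L θ₂ ≤ ⟪gradient L θ₂, θ₁ - θ₂⟫ + τ₂ * ‖θ₁ - θ₂‖ ^ 2)
    (hgrad : ∀ θ : EuclideanSpace ℝ (Fin p), ‖gradient L θ‖ ≤ B)
    (θhat : EuclideanSpace ℝ (Fin p)) (hmin : ∀ θ, L θhat ≤ L θ)
    (hη : 0 < η) (hηle : η ≤ 1 / (2 * τ₂))
    (K₀ : ℕ) (hK₀ : 1 ≤ K₀)
    (θ N : ℕ → EuclideanSpace ℝ (Fin p))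
    (hrec : ∀ k < K₀, θ (k + 1) = θ k - η • gradient L (θ k) + η • N k)
    (hε : 0 ≤ ε) (hN : ∀ k < K₀, ‖N k‖ ≤ ε)
    (R C' : ℝ) (hR : R = ‖θ 0 - θhat‖) (hC' : C' = 2 * η * R + 2 * η ^ 2 * (B + 1))
    (hsmall : ((K₀ : ℝ) * C' + 2 * ((K₀ : ℝ) - 1) * η) * ε ≤ 1) :
    L (θ K₀) - L θhat ≤
      R ^ 2 / (2 * η * (K₀ : ℝ)) + (R + 1) * ε + (2 * η * B + η * ε / 2) * ((K₀ : ℝ) + 1) * ε := by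
  have hRnn : 0 ≤ R := hR ▸ norm_nonneg _
  have hstep := fun (k : ℕ) (hk : k < K₀) =>
    step_lemma L τ₂ B η ε hτ₂ hB hdiff hconv hsmooth hgrad θhat hmin hη hηle hε
      (θ k) (N k) (hN k hk) (θ (k + 1)) (hrec k hk)
  -- distance bound
  have hD : ∀ m, m ≤ K₀ → ‖θ m - θhat‖ ≤ R + m * η * ε := by
    intro m
    induction m with
    | zero => intro _; simp [← hR]
    | succ m ih =>
      intro hm
      have hk : m < K₀ := by omega
      have h1 := (hstep m hk).1
      have h2 := ih (le_of_lt hk)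
      push_cast
      linarith
  -- summed inequality
  have hsum : ∀ m, m ≤ K₀ →
      ‖θ m - θhat‖ ^ 2 + 2 * η * (∑ k ∈ Finset.range m, (L (θ (k + 1)) - L θhat)) ≤
        R ^ 2 + 2 * η * ε * m * R + η ^ 2 * ε ^ 2 * m * (m - 1)
          + (2 * η ^ 2 * B * ε + 2 * η ^ 2 * ε ^ 2) * m := by
    intro m
    induction m with
    | zero => intro _; simp [← hR]
    | succ m ih =>
      intro hm
      have hk : m < K₀ := by omega
      have h1 := (hstep m hk).2.1
      have h2 := ih (le_of_lt hk)
      have h3 : 2 * η * ε * ‖θ m - θhat‖ ≤ 2 * η * ε * (R + m * η * ε) :=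
        mul_le_mul_of_nonneg_left (hD m (le_of_lt hk)) (by positivity)
      rw [Finset.sum_range_succ]
      push_cast
      linarith [h1, h2, h3]
  -- chain of one-step value bounds
  have hchain : ∀ k j, k + j ≤ K₀ →
      L (θ (k + j)) ≤ L (θ k) + j * (2 * η * B * ε + η * ε ^ 2 / 2) := by
    intro k j
    induction j with
    | zero => intro _; simp
    | succ j ih =>
      intro h
      have h1 : k + j < K₀ := by omega
      have h2 := (hstep (k + j) h1).2.2
      have h3 := ih (by omega)
      have h4 : k + (j + 1) = (k + j) + 1 := rfl
      rw [h4]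
      push_cast
      linarith
  have hper : ∀ k < K₀, L (θ K₀) - L θhat ≤
      (L (θ (k + 1)) - L θhat) + ((K₀ : ℝ) - (k + 1)) * (2 * η * B * ε + η * ε ^ 2 / 2) := by
    intro k hk
    have h1 : (k + 1) + (K₀ - (k + 1)) = K₀ := by omega
    have h2 := hchain (k + 1) (K₀ - (k + 1)) (by omega)
    rw [h1] at h2
    have hc : ((K₀ - (k + 1) : ℕ) : ℝ) = (K₀ : ℝ) - ((k : ℝ) + 1) := by
      push_cast [Nat.cast_sub (by omega : k + 1 ≤ K₀)]; ring
    rw [hc] at h2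
    linarith
  -- sum the per-index bounds
  have hS := Finset.sum_le_sum (fun k hk => hper k (Finset.mem_range.mp hk))
  rw [Finset.sum_const, Finset.card_range, nsmul_eq_mul] at hS
  have hgauss : ∑ k ∈ Finset.range K₀,
      (((K₀ : ℝ) - ((k : ℝ) + 1)) * (2 * η * B * ε + η * ε ^ 2 / 2)) =
      (K₀ : ℝ) * ((K₀ : ℝ) - 1) / 2 * (2 * η * B * ε + η * ε ^ 2 / 2) := by
    have he : ∀ k ∈ Finset.range K₀, ((K₀ : ℝ) - ((k : ℝ) + 1)) * (2 * η * B * ε + η * ε ^ 2 / 2)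
        = ((K₀ : ℝ) - 1) * (2 * η * B * ε + η * ε ^ 2 / 2)
          - (2 * η * B * ε + η * ε ^ 2 / 2) * (k : ℝ) := by
      intro k _; ring
    rw [Finset.sum_congr rfl he, Finset.sum_sub_distrib, Finset.sum_const, Finset.card_range,
      ← Finset.mul_sum, sum_range_cast, nsmul_eq_mul]
    ring
  rw [Finset.sum_add_distrib, hgauss] at hS
  -- combine
  have hK₀pos : (0 : ℝ) < (K₀ : ℝ) := by exact_mod_cast Nat.pos_of_ne_zero (by omega)
  have hsumK := hsum K₀ le_rfl
  have hnn : 0 ≤ ‖θ K₀ - θhat‖ ^ 2 := by positivity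
  have hS2 : 2 * η * ((K₀ : ℝ) * (L (θ K₀) - L θhat)) ≤
      2 * η * ((∑ k ∈ Finset.range K₀, (L (θ (k + 1)) - L θhat))
        + (K₀ : ℝ) * ((K₀ : ℝ) - 1) / 2 * (2 * η * B * ε + η * ε ^ 2 / 2)) :=
    mul_le_mul_of_nonneg_left hS (by positivity)
  -- the small-noise condition
  have hC'nn : 0 ≤ C' := by rw [hC']; positivity
  have hsmall' : η * ε * ((K₀ : ℝ) - 1) ≤ 1 / 2 := by
    have h1 : 0 ≤ (K₀ : ℝ) * C' * ε := by positivity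
    nlinarith [hsmall]
  have hK1 : (1 : ℝ) ≤ (K₀ : ℝ) := by exact_mod_cast hK₀
  -- unit inequality
  have hunit : R + η * ε * ((K₀ : ℝ) - 1) / 2 + η * B + η * ε + η * B * ((K₀ : ℝ) - 1)
      + η * ε * ((K₀ : ℝ) - 1) / 4 ≤
      R + 1 + 2 * η * B * ((K₀ : ℝ) + 1) + η * ε * ((K₀ : ℝ) + 1) / 2 := by
    nlinarith [hsmall', mul_nonneg (mul_nonneg hη.le hB.le)
      (by linarith : (0 : ℝ) ≤ (K₀ : ℝ) + 2)]
  have hmul : 2 * η * (K₀ : ℝ) * ε * (R + η * ε * ((K₀ : ℝ) - 1) / 2 + η * B + η * ε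
        + η * B * ((K₀ : ℝ) - 1) + η * ε * ((K₀ : ℝ) - 1) / 4) ≤
      2 * η * (K₀ : ℝ) * ε * (R + 1 + 2 * η * B * ((K₀ : ℝ) + 1) + η * ε * ((K₀ : ℝ) + 1) / 2) :=
    mul_le_mul_of_nonneg_left hunit (by positivity)
  have key : 2 * η * (K₀ : ℝ) * (L (θ K₀) - L θhat) ≤
      R ^ 2 + 2 * η * (K₀ : ℝ) * ((R + 1) * ε + (2 * η * B + η * ε / 2) * ((K₀ : ℝ) + 1) * ε) := by
    have e1 : R ^ 2 + 2 * η * ε * (K₀ : ℝ) * R + η ^ 2 * ε ^ 2 * (K₀ : ℝ) * ((K₀ : ℝ) - 1)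
        + (2 * η ^ 2 * B * ε + 2 * η ^ 2 * ε ^ 2) * (K₀ : ℝ)
        + 2 * η * ((K₀ : ℝ) * ((K₀ : ℝ) - 1) / 2 * (2 * η * B * ε + η * ε ^ 2 / 2)) =
        R ^ 2 + 2 * η * (K₀ : ℝ) * ε * (R + η * ε * ((K₀ : ℝ) - 1) / 2 + η * B + η * ε
          + η * B * ((K₀ : ℝ) - 1) + η * ε * ((K₀ : ℝ) - 1) / 4) := by ring
    have e2 : R ^ 2 + 2 * η * (K₀ : ℝ) * ε *
          (R + 1 + 2 * η * B * ((K₀ : ℝ) + 1) + η * ε * ((K₀ : ℝ) + 1) / 2) =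
        R ^ 2 + 2 * η * (K₀ : ℝ) * ((R + 1) * ε + (2 * η * B + η * ε / 2) * ((K₀ : ℝ) + 1) * ε) := by
      ring
    linarith [hS2, hsumK, hnn, hmul, e1, e2]
  have h2ηK : (0 : ℝ) < 2 * η * (K₀ : ℝ) := by positivity
  calc L (θ K₀) - L θhat
      = (2 * η * (K₀ : ℝ) * (L (θ K₀) - L θhat)) / (2 * η * (K₀ : ℝ)) := by
        field_simp
    _ ≤ (R ^ 2 + 2 * η * (K₀ : ℝ) * ((R + 1) * ε + (2 * η * B + η * ε / 2) * ((K₀ : ℝ) + 1) * ε))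
          / (2 * η * (K₀ : ℝ)) := by gcongr
    _ = R ^ 2 / (2 * η * (K₀ : ℝ)) + (R + 1) * ε + (2 * η * B + η * ε / 2) * ((K₀ : ℝ) + 1) * ε := by
        field_simp
        ring
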